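/- Let p be a prime, P a finite extraspecial p-group with center Z, and X an elementary abelian subgroup of P with Z ≤ X. Let P₂ be a subgroup of the centralizer C_P(X) such that P₂ ∩ X = Z and P₂X = C_P(X). Then the map T ↦ TX is a well-defined order isomorphism from the poset (ordered by inclusion) of elementary abelian subgroups T of P with Z < T ≤ P₂ onto the poset of elementary abelian subgroups A of P with X < A. -/
import Mathlib


/-- A subgroup is elementary abelian for the prime `p` if it is abelian and
every element satisfies `a ^ p = 1`. -/
def IsElementaryAbelian (p : ℕ) {G : Type*} [Group G] (A : Subgroup G) : Prop :=
  (∀ a ∈ A, ∀ b ∈ A, Commute a b) ∧ ∀ a ∈ A, a ^ p = 1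

/-- A finite `p`-group is extraspecial if its center has order `p` and coincides with
its commutator subgroup and its Frattini subgroup. -/
def IsExtraspecial (p : ℕ) (G : Type*) [Group G] : Prop :=
  Nat.card (Subgroup.center G) = p ∧ Subgroup.center G = commutator G ∧
    Subgroup.center G = frattini G

/-- If every element of `H` commutes with every element of `K`, then
`H ⊔ K` is the set of products `h * k`. -/
lemma mem_sup_of_commute {G : Type*} [Group G] {H K : Subgroup G}
    (hc : ∀ h ∈ H, ∀ k ∈ K, Commute h k) {g : G} :
    g ∈ H ⊔ K ↔ ∃ h ∈ H, ∃ k ∈ K, h * k = g := by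
  constructor
  · intro hg
    let S : Subgroup G :=
      { carrier := {g | ∃ h ∈ H, ∃ k ∈ K, h * k = g}
        one_mem' := ⟨1, H.one_mem, 1, K.one_mem, one_mul 1⟩
        mul_mem' := by
          rintro a b ⟨h, hh, k, hk, rfl⟩ ⟨h', hh', k', hk', rfl⟩
          refine ⟨h * h', H.mul_mem hh hh', k * k', K.mul_mem hk hk', ?_⟩
          have hcom : k * h' = h' * k := ((hc h' hh' k hk).symm).eq
          calc h * h' * (k * k') = h * (h' * k) * k' := by group
            _ = h * (k * h') * k' := by rw [hcom]
            _ = h * k * (h' * k') := by group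
        inv_mem' := by
          rintro a ⟨h, hh, k, hk, rfl⟩
          refine ⟨h⁻¹, H.inv_mem hh, k⁻¹, K.inv_mem hk, ?_⟩
          have : Commute h⁻¹ k⁻¹ := (hc h hh k hk).inv_inv
          rw [this.eq, ← mul_inv_rev] }
    have hle : H ⊔ K ≤ S := sup_le
      (fun h hh => ⟨h, hh, 1, K.one_mem, mul_one h⟩)
      (fun k hk => ⟨1, H.one_mem, k, hk, one_mul k⟩)
    exact hle hg
  · rintro ⟨h, hh, k, hk, rfl⟩
    exact Subgroup.mul_mem _ (Subgroup.mem_sup_left hh) (Subgroup.mem_sup_right hk)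

theorem upper_interval_iso_of_extraspecial
    (p : ℕ) (hp : p.Prime) (P : Type*) [Group P] [Finite P]
    (hPp : IsPGroup p P) (hext : IsExtraspecial p P)
    (X : Subgroup P) (hX : IsElementaryAbelian p X)
    (hZX : Subgroup.center P ≤ X)
    (P₂ : Subgroup P) (hP₂le : P₂ ≤ Subgroup.centralizer (X : Set P))
    (hmeet : P₂ ⊓ X = Subgroup.center P)
    (hjoin : P₂ ⊔ X = Subgroup.centralizer (X : Set P)) :
    ∃ e : {T : Subgroup P // IsElementaryAbelian p T ∧ Subgroup.center P < T ∧ T ≤ P₂} ≃o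
          {A : Subgroup P // IsElementaryAbelian p A ∧ X < A},
      ∀ T, (e T : Subgroup P) = (T : Subgroup P) ⊔ X := by
  set Z := Subgroup.center P with hZ
  -- elements of P₂ commute with elements of X
  have hcomm : ∀ h ∈ P₂, ∀ x ∈ X, Commute h x := by
    intro h hh x hx
    exact ((Subgroup.mem_centralizer_iff.mp (hP₂le hh)) x hx).symm
  -- any abelian subgroup containing X is contained in the centralizer of X
  have habel_le : ∀ A : Subgroup P, IsElementaryAbelian p A → X ≤ A →
      A ≤ Subgroup.centralizer (X : Set P) := by
    intro A hA hXA a ha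
    exact Subgroup.mem_centralizer_iff.mpr fun x hx => (hA.1 a ha x (hXA hx)).symm.eq
  -- key decomposition of elements of any abelian A with X < A
  have hdecomp : ∀ A : Subgroup P, IsElementaryAbelian p A → X ≤ A →
      ∀ a ∈ A, ∃ t, t ∈ A ⊓ P₂ ∧ ∃ x ∈ X, t * x = a := by
    intro A hA hXA a ha
    have : a ∈ P₂ ⊔ X := by rw [hjoin]; exact habel_le A hA hXA ha
    obtain ⟨t, ht, x, hx, rfl⟩ := (mem_sup_of_commute hcomm).mp this
    refine ⟨t, ⟨?_, ht⟩, x, hx, rfl⟩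
    have : t = t * x * x⁻¹ := by group
    rw [this]
    exact A.mul_mem ha (A.inv_mem (hXA hx))
  -- forward map is well defined
  have hfwd : ∀ T : Subgroup P, IsElementaryAbelian p T → Z < T → T ≤ P₂ →
      IsElementaryAbelian p (T ⊔ X) ∧ X < T ⊔ X := by
    intro T hT hZT hTP₂
    have hcT : ∀ t ∈ T, ∀ x ∈ X, Commute t x := fun t ht x hx =>
      hcomm t (hTP₂ ht) x hx
    constructor
    · constructor
      · intro a ha b hb
        obtain ⟨t, ht, x, hx, rfl⟩ := (mem_sup_of_commute hcT).mp ha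
        obtain ⟨t', ht', x', hx', rfl⟩ := (mem_sup_of_commute hcT).mp hb
        exact ((hT.1 t ht t' ht').mul_right (hcT t ht x' hx')).mul_left
          (((hcT t' ht' x hx).symm).mul_right (hX.1 x hx x' hx'))
      · intro a ha
        obtain ⟨t, ht, x, hx, rfl⟩ := (mem_sup_of_commute hcT).mp ha
        rw [(hcT t ht x hx).mul_pow, hT.2 t ht, hX.2 x hx, one_mul]
    · refine lt_of_le_of_ne le_sup_right fun h => ?_
      have hTX : T ≤ X := h ▸ le_sup_left
      have : T ≤ Z := by rw [← hmeet]; exact le_inf hTP₂ hTX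
      exact (not_le_of_gt hZT) this
  -- backward map is well defined
  have hbwd : ∀ A : Subgroup P, IsElementaryAbelian p A → X < A →
      IsElementaryAbelian p (A ⊓ P₂) ∧ Z < A ⊓ P₂ ∧ A ⊓ P₂ ≤ P₂ := by
    intro A hA hXA
    refine ⟨⟨fun a ha b hb => hA.1 a (inf_le_left (a := A) ha) b (inf_le_left (a := A) hb),
      fun a ha => hA.2 a (inf_le_left (a := A) ha)⟩, ?_, inf_le_right⟩
    have hZle : Z ≤ A ⊓ P₂ := le_inf (le_trans hZX (le_trans hXA.le le_rfl))
      (by rw [← hmeet]; exact inf_le_left)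
    refine lt_of_le_of_ne hZle fun h => ?_
    obtain ⟨a, ha, hax⟩ := SetLike.exists_of_lt hXA
    obtain ⟨t, ht, x, hx, hfac⟩ := hdecomp A hA hXA.le a ha
    have htZ : t ∈ Z := h ▸ ht
    have : a ∈ X := by rw [← hfac]; exact X.mul_mem (hZX htZ) hx
    exact hax this
  -- the two maps
  let F : {T : Subgroup P // IsElementaryAbelian p T ∧ Z < T ∧ T ≤ P₂} →
      {A : Subgroup P // IsElementaryAbelian p A ∧ X < A} :=
    fun T => ⟨(T : Subgroup P) ⊔ X,
      (hfwd T T.2.1 T.2.2.1 T.2.2.2).1, (hfwd T T.2.1 T.2.2.1 T.2.2.2).2⟩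
  let G : {A : Subgroup P // IsElementaryAbelian p A ∧ X < A} →
      {T : Subgroup P // IsElementaryAbelian p T ∧ Z < T ∧ T ≤ P₂} :=
    fun A => ⟨(A : Subgroup P) ⊓ P₂,
      (hbwd A A.2.1 A.2.2).1, (hbwd A A.2.1 A.2.2).2.1, (hbwd A A.2.1 A.2.2).2.2⟩
  -- left inverse : (T ⊔ X) ⊓ P₂ = T
  have hleft : ∀ T : Subgroup P, IsElementaryAbelian p T → Z < T → T ≤ P₂ →
      ((T ⊔ X) ⊓ P₂ : Subgroup P) = T := by
    intro T hT hZT hTP₂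
    refine le_antisymm ?_ (le_inf le_sup_left hTP₂)
    intro g hg
    have hcT : ∀ t ∈ T, ∀ x ∈ X, Commute t x := fun t ht x hx =>
      hcomm t (hTP₂ ht) x hx
    obtain ⟨hg1, hg2⟩ := hg
    obtain ⟨t, ht, x, hx, rfl⟩ := (mem_sup_of_commute hcT).mp hg1
    have hxP₂ : x ∈ P₂ := by
      have : x = t⁻¹ * (t * x) := by group
      rw [this]
      exact P₂.mul_mem (P₂.inv_mem (hTP₂ ht)) hg2
    have hxZ : x ∈ Z := by rw [← hmeet]; exact ⟨hxP₂, hx⟩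
    exact T.mul_mem ht (hZT.le hxZ)
  -- right inverse : (A ⊓ P₂) ⊔ X = A
  have hright : ∀ A : Subgroup P, IsElementaryAbelian p A → X < A →
      ((A ⊓ P₂) ⊔ X : Subgroup P) = A := by
    intro A hA hXA
    refine le_antisymm (sup_le inf_le_left hXA.le) ?_
    intro a ha
    obtain ⟨t, ht, x, hx, hfac⟩ := hdecomp A hA hXA.le a ha
    rw [← hfac]
    exact Subgroup.mul_mem _ (Subgroup.mem_sup_left ht) (Subgroup.mem_sup_right hx)
  refine ⟨⟨⟨F, G, ?_, ?_⟩, ?_⟩, fun T => rfl⟩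
  · intro T
    apply Subtype.ext
    exact hleft T T.2.1 T.2.2.1 T.2.2.2
  · intro A
    apply Subtype.ext
    exact hright A A.2.1 A.2.2
  · intro T T'
    constructor
    · intro h
      have h' : (T : Subgroup P) ⊔ X ≤ (T' : Subgroup P) ⊔ X := h
      calc (T : Subgroup P) = ((T : Subgroup P) ⊔ X) ⊓ P₂ :=
            (hleft T T.2.1 T.2.2.1 T.2.2.2).symm
        _ ≤ ((T' : Subgroup P) ⊔ X) ⊓ P₂ := inf_le_inf_right _ h'
        _ = T' := hleft T' T'.2.1 T'.2.2.1 T'.2.2.2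
    · intro h
      exact sup_le_sup_right h X
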